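/- arXiv:0711.1479 — 8 statements merged into one kernel-verified Lean document; each statement's English description precedes it below -/
import Mathlib

section
/- Let B be a 3×3 real symmetric positive-definite matrix and let h be a map from 3×3 real symmetric positive-definite matrices to 3×3 real symmetric matrices that is isotropic, i.e. for every 3×3 real orthogonal matrix R with det R = 1 one has h(Rᵀ B R) = Rᵀ h(B) R. Then every eigenvector of B is an eigenvector of h(B): if n is a nonzero vector in ℝ³ and B·n = μ·n for some real μ, then there exists a real ν with h(B)·n = ν·n. -/
open Matrix

/-- If `h` is an isotropic map from symmetric positive-definite `3×3` real matrices to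
symmetric matrices, then every eigenvector of a symmetric positive-definite `B` is an
eigenvector of `h B`. -/
theorem eigenvector_of_isotropic
    (B : Matrix (Fin 3) (Fin 3) ℝ) (hB : B.PosDef)
    (h : Matrix (Fin 3) (Fin 3) ℝ → Matrix (Fin 3) (Fin 3) ℝ)
    (hsym : ∀ M : Matrix (Fin 3) (Fin 3) ℝ, M.PosDef → (h M)ᵀ = h M)
    (hiso : ∀ M : Matrix (Fin 3) (Fin 3) ℝ, M.PosDef →
      ∀ R : Matrix (Fin 3) (Fin 3) ℝ, Rᵀ * R = 1 → R.det = 1 →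
        h (Rᵀ * M * R) = Rᵀ * h M * R)
    (n : Fin 3 → ℝ) (hn : n ≠ 0) (μ : ℝ) (hμ : B.mulVec n = μ • n) :
    ∃ ν : ℝ, (h B).mulVec n = ν • n := by
  set c : ℝ := n ⬝ᵥ n with hc
  have hc0 : c ≠ 0 := fun hz => hn (dotProduct_self_eq_zero.mp hz)
  set Q : Matrix (Fin 3) (Fin 3) ℝ := vecMulVec n n with hQ
  have hQsym : Qᵀ = Q := by
    ext i j; simp [hQ, vecMulVec_apply, transpose_apply, mul_comm]
  have hQQ : Q * Q = c • Q := by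
    ext i j
    simp only [hQ, mul_apply, vecMulVec_apply, Matrix.smul_apply, smul_eq_mul, hc, dotProduct]
    rw [Finset.sum_congr rfl (fun k _ => by ring : ∀ k ∈ Finset.univ,
      n i * n k * (n k * n j) = (n k * n k) * (n i * n j)), ← Finset.sum_mul]
  have hQv : ∀ v : Fin 3 → ℝ, Q.mulVec v = (n ⬝ᵥ v) • n := by
    intro v
    ext i
    simp only [hQ, mulVec, dotProduct, vecMulVec_apply, Pi.smul_apply, smul_eq_mul]
    rw [Finset.sum_mul]
    exact Finset.sum_congr rfl fun k _ => by ring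
  have hBsym : Bᵀ = B := hB.isHermitian.eq
  have hBQ : B * Q = μ • Q := by
    ext i j
    have hthis := congrFun hμ i
    simp only [mulVec, dotProduct, Pi.smul_apply, smul_eq_mul] at hthis
    simp only [mul_apply, hQ, vecMulVec_apply, Matrix.smul_apply, smul_eq_mul]
    calc ∑ k, B i k * (n k * n j) = (∑ k, B i k * n k) * n j := by
          rw [Finset.sum_mul]; exact Finset.sum_congr rfl fun k _ => by ring
      _ = μ * (n i * n j) := by rw [hthis]; ring
  have hQB : Q * B = μ • Q := by
    have hthis : (B * Q)ᵀ = (μ • Q)ᵀ := by rw [hBQ]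
    rwa [transpose_mul, hBsym, hQsym, transpose_smul, hQsym] at hthis
  set R : Matrix (Fin 3) (Fin 3) ℝ := (2 / c) • Q - 1 with hR
  have hRsym : Rᵀ = R := by rw [hR, transpose_sub, transpose_smul, hQsym, transpose_one]
  have hRR : R * R = 1 := by
    rw [hR, sub_mul, mul_sub, mul_sub, smul_mul_smul_comm, hQQ, one_mul, mul_one, smul_smul, one_mul]
    have h1 : (2 / c * (2 / c) * c) • Q = (2/c) • Q + (2/c) • Q := by
      rw [← add_smul]; congr 1; field_simp; ring
    rw [h1]
    abel
  have hRdet : R.det = 1 := by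
    have hQcr : Q = replicateCol Unit n * replicateRow Unit n := vecMulVec_eq Unit n n
    have hform : R = (-1 : ℝ) • (1 + replicateCol Unit ((2/c) • n) * replicateRow Unit (-n)) := by
      rw [hR, hQcr]
      ext i j
      simp [mul_apply, replicateCol, replicateRow, one_apply]
      by_cases hij : i = j <;> simp [hij] <;> ring
    rw [hform, det_smul, det_one_add_replicateCol_mul_replicateRow]
    have hdp : (-n) ⬝ᵥ ((2/c) • n) = -2 := by
      rw [neg_dotProduct, dotProduct_smul, smul_eq_mul, ← hc]
      field_simp
    rw [hdp]
    norm_num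
  have hRBR : Rᵀ * B * R = B := by
    have hcomm : B * R = R * B := by
      rw [hR, mul_sub, sub_mul, mul_one, one_mul, mul_smul_comm, smul_mul_assoc, hBQ, hQB]
    rw [hRsym, mul_assoc, hcomm, ← mul_assoc, hRR, one_mul]
  have key : h B = R * h B * R := by
    conv_lhs => rw [← hRBR]
    rw [hiso B hB R (by rw [hRsym, hRR]) hRdet, hRsym]
  have hcommh : R * h B = h B * R := by
    have hthis := congrArg (fun M => M * R) key
    rw [mul_assoc, hRR, mul_one] at hthis
    exact hthis.symm
  have hQh : Q * h B = h B * Q := by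
    have hthis : ((2/c) • Q - 1) * h B = h B * ((2/c) • Q - 1) := by rw [← hR]; exact hcommh
    rw [sub_mul, mul_sub, one_mul, mul_one, smul_mul_assoc, mul_smul_comm, sub_left_inj] at hthis
    have hc2 : (2/c : ℝ) ≠ 0 := div_ne_zero two_ne_zero hc0
    exact smul_right_injective _ hc2 hthis
  set w : Fin 3 → ℝ := (h B).mulVec n with hw
  have heq : (n ⬝ᵥ w) • n = c • w := by
    have h1 : (Q * h B).mulVec n = (n ⬝ᵥ w) • n := by
      rw [← mulVec_mulVec, ← hw, hQv]
    have h2 : (h B * Q).mulVec n = c • w := by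
      rw [← mulVec_mulVec, hQv n, mulVec_smul, ← hc, hw]
    rw [← h1, ← h2, hQh]
  refine ⟨(n ⬝ᵥ w) / c, ?_⟩
  have hmc : c * ((n ⬝ᵥ w) / c) = n ⬝ᵥ w := by field_simp
  have hfin : c • (((n ⬝ᵥ w) / c) • n) = c • w := by rw [smul_smul, hmc, heq]
  exact (smul_right_injective _ hc0 hfin).symm
end

section
/- Let B be a 3×3 real symmetric positive-definite matrix and let h be an isotropic map from 3×3 real symmetric positive-definite matrices to 3×3 real symmetric matrices. Then B and h(B) commute: B * h(B) = h(B) * B. -/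
open Matrix

/-- If `h` is an isotropic map from symmetric positive-definite `3×3` real matrices to
symmetric matrices, then `B` and `h B` commute. -/
theorem commute_of_isotropic
    (B : Matrix (Fin 3) (Fin 3) ℝ) (hB : B.PosDef)
    (h : Matrix (Fin 3) (Fin 3) ℝ → Matrix (Fin 3) (Fin 3) ℝ)
    (hsym : ∀ M : Matrix (Fin 3) (Fin 3) ℝ, M.PosDef → (h M)ᵀ = h M)
    (hiso : ∀ M : Matrix (Fin 3) (Fin 3) ℝ, M.PosDef →
      ∀ R : Matrix (Fin 3) (Fin 3) ℝ, Rᵀ * R = 1 → R.det = 1 →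
        h (Rᵀ * M * R) = Rᵀ * h M * R) :
    B * h B = h B * B := by
  have hH : B.IsHermitian := hB.1
  set v : Fin 3 → ℝ := hH.eigenvalues with hv
  set D : Matrix (Fin 3) (Fin 3) ℝ := diagonal v with hD
  have hDpos : D.PosDef := by
    rw [hD, posDef_diagonal_iff]
    exact fun i => hB.eigenvalues_pos i
  -- h D is diagonal
  have hDdiag : ∀ i j : Fin 3, i ≠ j → h D i j = 0 := by
    intro i j hij
    set d : Fin 3 → ℝ := fun t => if t = i then 1 else -1 with hd
    have hdsq : ∀ t, d t * d t = 1 := by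
      intro t; by_cases ht : t = i <;> simp [hd, ht]
    have hR1 : (diagonal d)ᵀ * diagonal d = 1 := by
      rw [diagonal_transpose, diagonal_mul_diagonal]
      rw [show (1 : Matrix (Fin 3) (Fin 3) ℝ) = diagonal 1 from (diagonal_one).symm]
      exact congrArg diagonal (funext hdsq)
    have hRdet : (diagonal d).det = 1 := by
      rw [det_diagonal, Fin.prod_univ_three]
      fin_cases i <;> simp [hd] <;> norm_num
    have hRD : (diagonal d)ᵀ * D * diagonal d = D := by
      rw [diagonal_transpose, hD, diagonal_mul_diagonal, diagonal_mul_diagonal]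
      refine congrArg diagonal (funext fun t => ?_)
      show d t * v t * d t = v t
      rw [mul_comm (d t) (v t), mul_assoc, hdsq t, mul_one]
    have := hiso D hDpos (diagonal d) hR1 hRdet
    rw [hRD] at this
    have hentry : h D i j = ((diagonal d)ᵀ * h D * diagonal d) i j := by
      conv_lhs => rw [this]
    rw [diagonal_transpose, mul_diagonal, diagonal_mul] at hentry
    have hdi : d i = 1 := by simp [hd]
    have hdj : d j = -1 := by simp [hd, (Ne.symm hij)]
    rw [hdi, hdj] at hentry
    linarith
  have hcomm : D * h D = h D * D := by
    ext i j
    rw [hD, diagonal_mul, mul_diagonal]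
    by_cases hij : i = j
    · rw [hij, mul_comm]
    · rw [hDdiag i j hij, mul_zero, zero_mul]
  -- orthogonal change of basis with det 1
  set U : Matrix (Fin 3) (Fin 3) ℝ := (hH.eigenvectorUnitary : Matrix (Fin 3) (Fin 3) ℝ) with hU
  have hUmem := hH.eigenvectorUnitary.2
  have hUst1 : star U * U = 1 := (Unitary.mem_iff.mp hUmem).1
  have hU1st : U * star U = 1 := (Unitary.mem_iff.mp hUmem).2
  have hstar : ∀ M : Matrix (Fin 3) (Fin 3) ℝ, star M = Mᵀ := by
    intro M
    rw [Matrix.star_eq_conjTranspose, conjTranspose_eq_transpose_of_trivial]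
  have hUT : Uᵀ * U = 1 := by rw [← hstar]; exact hUst1
  have hUTr : U * Uᵀ = 1 := by rw [← hstar]; exact hU1st
  have hBspec : B = U * D * Uᵀ := by
    have := hH.spectral_theorem
    simp only [Unitary.conjStarAlgAut_apply, Unitary.coe_star] at this
    rw [hstar] at this
    convert this using 2 <;> rfl
  -- sign fix
  set s : ℝ := U.det with hs
  have hs2 : s * s = 1 := by
    have : U.det * Uᵀ.det = 1 := by rw [← det_mul, hUTr, det_one]
    rw [det_transpose] at this
    exact this
  set c : Fin 3 → ℝ := fun t => if t = 0 then s else 1 with hc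
  have hcsq : ∀ t, c t * c t = 1 := by
    intro t; by_cases ht : t = 0 <;> simp [hc, ht, hs2]
  set S : Matrix (Fin 3) (Fin 3) ℝ := diagonal c with hS
  have hSS : S * S = 1 := by
    rw [hS, diagonal_mul_diagonal,
      show (1 : Matrix (Fin 3) (Fin 3) ℝ) = diagonal 1 from (diagonal_one).symm]
    exact congrArg diagonal (funext hcsq)
  have hST : Sᵀ = S := by rw [hS, diagonal_transpose]
  have hSdet : S.det = s := by
    rw [hS, det_diagonal, Fin.prod_univ_three]; simp [hc]
  set V : Matrix (Fin 3) (Fin 3) ℝ := U * S with hV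
  have hVT : V * Vᵀ = 1 := by
    rw [hV, transpose_mul, hST, mul_assoc, ← mul_assoc S, hSS, one_mul, hUTr]
  have hVdet : V.det = 1 := by
    rw [hV, det_mul, hSdet, ← hs, hs2]
  have hSD : S * D * S = D := by
    rw [hS, hD, diagonal_mul_diagonal, diagonal_mul_diagonal]
    refine congrArg diagonal (funext fun t => ?_)
    show c t * v t * c t = v t
    rw [mul_comm (c t) (v t), mul_assoc, hcsq t, mul_one]
  have hBV : B = V * D * Vᵀ := by
    rw [hV, transpose_mul, hST, hBspec]
    rw [show U * S * D * (S * Uᵀ) = U * (S * D * S) * Uᵀ by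
      simp only [mul_assoc]]
    rw [hSD]
  -- apply isotropy with R = Vᵀ
  have hR1 : (Vᵀ)ᵀ * Vᵀ = 1 := by rw [transpose_transpose, hVT]
  have hRdet : (Vᵀ).det = 1 := by rw [det_transpose, hVdet]
  have hhB : h B = V * h D * Vᵀ := by
    have := hiso D hDpos Vᵀ hR1 hRdet
    rw [transpose_transpose] at this
    rw [← hBV] at this
    exact this
  rw [hhB, hBV]
  have hTV : Vᵀ * V = 1 := mul_eq_one_comm.mp hVT
  calc V * D * Vᵀ * (V * h D * Vᵀ) = V * (D * (Vᵀ * V) * h D) * Vᵀ := by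
        simp only [mul_assoc]
      _ = V * (D * h D) * Vᵀ := by rw [hTV, mul_one]
      _ = V * (h D * D) * Vᵀ := by rw [hcomm]
      _ = V * (h D * (Vᵀ * V) * D) * Vᵀ := by rw [hTV, mul_one]
      _ = V * h D * Vᵀ * (V * D * Vᵀ) := by simp only [mul_assoc]
end

section
/- Let B be a 3×3 real symmetric positive-definite matrix (with hB : B.IsHermitian) and let h be an isotropic map from 3×3 real symmetric positive-definite matrices to 3×3 real symmetric matrices. Then for every real number s, the matrix h(B) commutes with the real power Bˢ, where Bˢ is defined by the continuous functional calculus applied to the eigenvalues: h(B) * hB.cfc (fun x => x ^ s) = hB.cfc (fun x => x ^ s) * h(B). -/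
open Matrix

/-- If `h` is an isotropic map from symmetric positive-definite `3×3` real matrices to
symmetric matrices, then `h B` commutes with every real power `Bˢ` of `B`, where `Bˢ` is
obtained by applying `x ↦ x ^ s` to the eigenvalues of `B` via the functional calculus. -/
theorem commute_rpow_of_isotropic
    (B : Matrix (Fin 3) (Fin 3) ℝ) (hBpd : B.PosDef) (hB : B.IsHermitian)
    (h : Matrix (Fin 3) (Fin 3) ℝ → Matrix (Fin 3) (Fin 3) ℝ)
    (hsym : ∀ M : Matrix (Fin 3) (Fin 3) ℝ, M.PosDef → (h M)ᵀ = h M)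
    (hiso : ∀ M : Matrix (Fin 3) (Fin 3) ℝ, M.PosDef →
      ∀ R : Matrix (Fin 3) (Fin 3) ℝ, Rᵀ * R = 1 → R.det = 1 →
        h (Rᵀ * M * R) = Rᵀ * h M * R)
    (s : ℝ) :
    h B * hB.cfc (fun x => x ^ s) = hB.cfc (fun x => x ^ s) * h B := by
  classical
  set U : Matrix (Fin 3) (Fin 3) ℝ := (hB.eigenvectorUnitary : Matrix (Fin 3) (Fin 3) ℝ) with hUdef
  have hstar : ∀ M : Matrix (Fin 3) (Fin 3) ℝ, star M = Mᵀ := by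
    intro M
    ext i j
    simp [Matrix.star_apply]
  have hU1 : Uᵀ * U = 1 := by
    rw [← hstar]; exact Unitary.coe_star_mul_self hB.eigenvectorUnitary
  have hU2 : U * Uᵀ = 1 := by
    rw [← hstar]; exact Unitary.coe_mul_star_self hB.eigenvectorUnitary
  set d : Fin 3 → ℝ := fun i => hB.eigenvalues i with hd
  have hspec : B = U * Matrix.diagonal d * Uᵀ := by
    rw [← hstar]
    have := hB.spectral_theorem
    rw [Unitary.conjStarAlgAut_apply] at this
    exact this
  set M : Matrix (Fin 3) (Fin 3) ℝ := Uᵀ * h B * U with hM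
  have hBM : h B = U * M * Uᵀ := by
    rw [hM]
    calc h B = (U * Uᵀ) * h B * (U * Uᵀ) := by rw [hU2]; simp [Matrix.mul_assoc]
    _ = U * (Uᵀ * h B * U) * Uᵀ := by simp only [Matrix.mul_assoc]
  -- main conjugation fact
  have key : ∀ v : Fin 3 → ℝ, (∀ i, v i * v i = 1) → v 0 * v 1 * v 2 = 1 →
      Matrix.diagonal v * M * Matrix.diagonal v = M := by
    intro v hv hvdet
    set R : Matrix (Fin 3) (Fin 3) ℝ := U * Matrix.diagonal v * Uᵀ with hR
    have hRT : Rᵀ = R := by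
      rw [hR]
      simp [Matrix.transpose_mul, Matrix.diagonal_transpose, Matrix.mul_assoc]
    have hvv : Matrix.diagonal v * Matrix.diagonal v = 1 := by
      rw [Matrix.diagonal_mul_diagonal,
        show (fun i => v i * v i) = fun _ : Fin 3 => (1 : ℝ) from funext hv,
        Matrix.diagonal_one]
    have hRo : Rᵀ * R = 1 := by
      rw [hRT, hR]
      calc (U * Matrix.diagonal v * Uᵀ) * (U * Matrix.diagonal v * Uᵀ)
          = U * Matrix.diagonal v * (Uᵀ * U) * Matrix.diagonal v * Uᵀ := by
            simp only [Matrix.mul_assoc]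
        _ = U * (Matrix.diagonal v * Matrix.diagonal v) * Uᵀ := by
            rw [hU1]; simp only [Matrix.mul_one, Matrix.mul_assoc]
        _ = 1 := by rw [hvv, Matrix.mul_one, hU2]
    have hRdet : R.det = 1 := by
      have hUU : U.det * Uᵀ.det = 1 := by
        rw [← Matrix.det_mul, hU2, Matrix.det_one]
      have : R.det = U.det * (Matrix.diagonal v).det * Uᵀ.det := by
        rw [hR, Matrix.det_mul, Matrix.det_mul]
      rw [this, Matrix.det_diagonal, Fin.prod_univ_three]
      calc U.det * (v 0 * v 1 * v 2) * Uᵀ.det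
          = (v 0 * v 1 * v 2) * (U.det * Uᵀ.det) := by ring
        _ = 1 := by rw [hvdet, hUU, mul_one]
    have hfix : Rᵀ * B * R = B := by
      rw [hRT, hR, hspec]
      calc (U * Matrix.diagonal v * Uᵀ) * (U * Matrix.diagonal d * Uᵀ) *
            (U * Matrix.diagonal v * Uᵀ)
          = U * (Matrix.diagonal v * (Uᵀ * U) * Matrix.diagonal d * (Uᵀ * U) *
              Matrix.diagonal v) * Uᵀ := by simp only [Matrix.mul_assoc]
        _ = U * (Matrix.diagonal v * Matrix.diagonal d * Matrix.diagonal v) * Uᵀ := by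
            rw [hU1]; simp only [Matrix.mul_one, Matrix.one_mul, Matrix.mul_assoc]
        _ = U * Matrix.diagonal d * Uᵀ := by
            rw [Matrix.diagonal_mul_diagonal, Matrix.diagonal_mul_diagonal,
              show (fun i => v i * d i * v i) = d from funext fun i =>
                by rw [mul_comm (v i) (d i), mul_assoc, hv i, mul_one]]
    have hiso' := hiso B hBpd R hRo hRdet
    rw [hfix] at hiso'
    -- h B = Rᵀ h B R
    rw [hRT, hR] at hiso'
    -- deduce diagonal v * M * diagonal v = M
    have : M = Matrix.diagonal v * M * Matrix.diagonal v := by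
      rw [hM]
      conv_lhs => rw [hiso']
      calc Uᵀ * (U * Matrix.diagonal v * Uᵀ * h B * (U * Matrix.diagonal v * Uᵀ)) * U
          = (Uᵀ * U) * Matrix.diagonal v * (Uᵀ * h B * U) * Matrix.diagonal v * (Uᵀ * U) := by
            simp only [Matrix.mul_assoc]
        _ = Matrix.diagonal v * (Uᵀ * h B * U) * Matrix.diagonal v := by
            rw [hU1]; simp only [Matrix.one_mul, Matrix.mul_one, Matrix.mul_assoc]
    exact this.symm
  have h1 := key ![1, -1, -1] (by intro i; fin_cases i <;> norm_num) (by norm_num [Matrix.cons_val_two, Matrix.tail_cons])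
  have h2 := key ![-1, 1, -1] (by intro i; fin_cases i <;> norm_num) (by norm_num [Matrix.cons_val_two, Matrix.tail_cons])
  -- entrywise consequences
  have hentry : ∀ (v : Fin 3 → ℝ), Matrix.diagonal v * M * Matrix.diagonal v = M →
      ∀ i j, v i * M i j * v j = M i j := by
    intro v hvM i j
    have := congrFun (congrFun hvM i) j
    simpa [Matrix.diagonal_mul, Matrix.mul_diagonal, mul_assoc] using this
  have e01 := hentry _ h1 0 1
  have e02 := hentry _ h1 0 2
  have e12 := hentry _ h2 1 2
  have e10 := hentry _ h1 1 0
  have e20 := hentry _ h1 2 0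
  have e21 := hentry _ h2 2 1
  simp only [Matrix.cons_val_zero, Matrix.cons_val_one, Matrix.head_cons,
    Matrix.cons_val_two, Matrix.tail_cons] at e01 e02 e12 e10 e20 e21
  have hz : ∀ i j : Fin 3, i ≠ j → M i j = 0 := by
    intro i j hij
    fin_cases i <;> fin_cases j
    · exact absurd rfl hij
    · show M 0 1 = 0; linarith
    · show M 0 2 = 0; linarith
    · show M 1 0 = 0; linarith
    · exact absurd rfl hij
    · show M 1 2 = 0; linarith
    · show M 2 0 = 0; linarith
    · show M 2 1 = 0; linarith
    · exact absurd rfl hij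
  have hdiagM : M = Matrix.diagonal (fun i => M i i) := by
    ext i j
    by_cases hij : i = j
    · subst hij; simp
    · rw [Matrix.diagonal_apply_ne _ hij]; exact hz i j hij
  -- the functional calculus matrix
  have hcfc : hB.cfc (fun x => x ^ s) = U * Matrix.diagonal (fun i => d i ^ s) * Uᵀ := by
    show (hB.eigenvectorUnitary : Matrix (Fin 3) (Fin 3) ℝ) *
        Matrix.diagonal (RCLike.ofReal ∘ (fun x => x ^ s) ∘ hB.eigenvalues) *
        star (hB.eigenvectorUnitary : Matrix (Fin 3) (Fin 3) ℝ) = _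
    have hdg : Matrix.diagonal (RCLike.ofReal ∘ (fun x => x ^ s) ∘ hB.eigenvalues) =
        Matrix.diagonal (fun i => d i ^ s) := by
      rw [show (RCLike.ofReal ∘ (fun x => x ^ s) ∘ hB.eigenvalues : Fin 3 → ℝ) =
        fun i => d i ^ s from funext fun i => by
          simp [Function.comp, RCLike.ofReal_real_eq_id, hd]]
    rw [hstar, hdg]
  rw [hcfc]
  conv_lhs => rw [hBM, hdiagM]
  conv_rhs => rw [hBM, hdiagM]
  calc U * Matrix.diagonal (fun i => M i i) * Uᵀ * (U * Matrix.diagonal (fun i => d i ^ s) * Uᵀ)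
      = U * (Matrix.diagonal (fun i => M i i) * (Uᵀ * U) * Matrix.diagonal (fun i => d i ^ s)) * Uᵀ := by
        simp only [Matrix.mul_assoc]
    _ = U * (Matrix.diagonal (fun i => M i i) * Matrix.diagonal (fun i => d i ^ s)) * Uᵀ := by
        rw [hU1]; simp only [Matrix.mul_one, Matrix.mul_assoc]
    _ = U * (Matrix.diagonal (fun i => d i ^ s) * Matrix.diagonal (fun i => M i i)) * Uᵀ := by
        rw [Matrix.diagonal_mul_diagonal, Matrix.diagonal_mul_diagonal,
          show (fun i => M i i * d i ^ s) = fun i => d i ^ s * M i i from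
            funext fun i => mul_comm _ _]
    _ = U * (Matrix.diagonal (fun i => d i ^ s) * (Uᵀ * U) * Matrix.diagonal (fun i => M i i)) * Uᵀ := by
        rw [hU1]; simp only [Matrix.mul_one, Matrix.mul_assoc]
    _ = U * Matrix.diagonal (fun i => d i ^ s) * Uᵀ * (U * Matrix.diagonal (fun i => M i i) * Uᵀ) := by
        simp only [Matrix.mul_assoc]
end

section
/- Let F be an invertible 3×3 real matrix with det F > 0, set C = Fᵀ F and B = F Fᵀ (both symmetric positive definite), and let h be an isotropic map from 3×3 real symmetric positive-definite matrices to 3×3 real symmetric matrices. Then F * h(C) * Fᵀ = √B * h(B) * √B, where √B is the positive-semidefinite square root of B. In other words, the push-forward F h(FᵀF) Fᵀ depends on F only through B = F Fᵀ. -/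
open Matrix

/-- The positive semidefinite square root, as defined in the older Mathlib
(removed from current Mathlib in favour of `CFC.sqrt`). -/
noncomputable def Matrix.PosSemidef.sqrt {n : Type*} [Fintype n] [DecidableEq n]
    {A : Matrix n n ℝ} (hA : A.PosSemidef) : Matrix n n ℝ :=
  hA.1.eigenvectorUnitary.1 * diagonal ((↑) ∘ (√·) ∘ hA.1.eigenvalues) *
    (star hA.1.eigenvectorUnitary : Matrix n n ℝ)

open scoped MatrixOrder in
theorem Matrix.PosSemidef.sqrt_eq_cfcSqrt {n : Type*} [Fintype n] [DecidableEq n]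
    {A : Matrix n n ℝ} (hA : A.PosSemidef) : hA.sqrt = CFC.sqrt A := by
  rw [CFC.sqrt_eq_cfc, cfc_nnreal_eq_real _ A hA.nonneg, hA.1.cfc_eq]
  simp only [IsHermitian.cfc, Matrix.PosSemidef.sqrt, Unitary.conjStarAlgAut_apply]
  congr 3
  funext i
  simp [max_eq_left (hA.eigenvalues_nonneg i)]

open scoped MatrixOrder in
theorem Matrix.PosSemidef.posSemidef_sqrt {n : Type*} [Fintype n] [DecidableEq n]
    {A : Matrix n n ℝ} (hA : A.PosSemidef) : hA.sqrt.PosSemidef := by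
  rw [hA.sqrt_eq_cfcSqrt]
  exact (CFC.sqrt_nonneg A).posSemidef

open scoped MatrixOrder in
theorem Matrix.PosSemidef.sqrt_mul_self {n : Type*} [Fintype n] [DecidableEq n]
    {A : Matrix n n ℝ} (hA : A.PosSemidef) : hA.sqrt * hA.sqrt = A := by
  rw [hA.sqrt_eq_cfcSqrt]
  exact CFC.sqrt_mul_sqrt_self A hA.nonneg

open scoped MatrixOrder in
theorem Matrix.PosSemidef.eq_sqrt_of_sq_eq {n : Type*} [Fintype n] [DecidableEq n]
    {B : Matrix n n ℝ} (hB : B.PosSemidef) {A : Matrix n n ℝ} (hA : A.PosSemidef)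
    (hAB : B ^ 2 = A) : B = hA.sqrt := by
  rw [hA.sqrt_eq_cfcSqrt, eq_comm, CFC.sqrt_eq_iff A B hA.nonneg hB.nonneg, ← hAB, pow_two]

/-- For an invertible `F` with positive determinant, `C = Fᵀ F` and `B = F Fᵀ` are symmetric
positive definite, and for an isotropic map `h` the push-forward `F h(C) Fᵀ` equals
`√B * h(B) * √B`, so it depends on `F` only through `B`. -/
theorem pushforward_eq_sqrt_mul_sqrt
    (F : Matrix (Fin 3) (Fin 3) ℝ) (hFdet : 0 < F.det)
    (hC : (Fᵀ * F).PosDef) (hB : (F * Fᵀ).PosDef)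
    (h : Matrix (Fin 3) (Fin 3) ℝ → Matrix (Fin 3) (Fin 3) ℝ)
    (hsym : ∀ M : Matrix (Fin 3) (Fin 3) ℝ, M.PosDef → (h M)ᵀ = h M)
    (hiso : ∀ M : Matrix (Fin 3) (Fin 3) ℝ, M.PosDef →
      ∀ R : Matrix (Fin 3) (Fin 3) ℝ, Rᵀ * R = 1 → R.det = 1 →
        h (Rᵀ * M * R) = Rᵀ * h M * R) :
    F * h (Fᵀ * F) * Fᵀ = hB.posSemidef.sqrt * h (F * Fᵀ) * hB.posSemidef.sqrt := by
  set U := hC.posSemidef.sqrt with hUdef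
  have hU : U.PosSemidef := hC.posSemidef.posSemidef_sqrt
  have hUsymm : Uᵀ = U := hU.isHermitian
  have hU2 : U * U = Fᵀ * F := hC.posSemidef.sqrt_mul_self
  -- determinant facts
  have hUdet_nonneg : (0:ℝ) ≤ U.det := by
    rw [hU.isHermitian.det_eq_prod_eigenvalues]
    exact Finset.prod_nonneg fun i _ => by exact_mod_cast hU.eigenvalues_nonneg i
  have hUdet_sq : U.det * U.det = F.det * F.det := by
    have := congrArg Matrix.det hU2
    simpa [Matrix.det_mul, Matrix.det_transpose] using this
  have hUdet_pos : 0 < U.det := by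
    rcases lt_or_eq_of_le hUdet_nonneg with hlt | heq
    · exact hlt
    · exfalso
      have : F.det * F.det = 0 := by rw [← hUdet_sq, ← heq]; ring
      nlinarith
  have hUdet_unit : IsUnit U.det := (ne_of_gt hUdet_pos).isUnit
  have hUinv : U * U⁻¹ = 1 := Matrix.mul_nonsing_inv U hUdet_unit
  have hUinv' : U⁻¹ * U = 1 := Matrix.nonsing_inv_mul U hUdet_unit
  have hUinvT : (U⁻¹)ᵀ = U⁻¹ := by rw [Matrix.transpose_nonsing_inv, hUsymm]
  set R := F * U⁻¹ with hRdef
  have hFRU : R * U = F := by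
    rw [hRdef, Matrix.mul_assoc, hUinv', Matrix.mul_one]
  have hRorth : Rᵀ * R = 1 := by
    rw [hRdef, Matrix.transpose_mul, hUinvT]
    calc U⁻¹ * Fᵀ * (F * U⁻¹) = U⁻¹ * (Fᵀ * F) * U⁻¹ := by
          simp [Matrix.mul_assoc]
      _ = U⁻¹ * (U * U) * U⁻¹ := by rw [hU2]
      _ = (U⁻¹ * U) * (U * U⁻¹) := by simp [Matrix.mul_assoc]
      _ = 1 := by rw [hUinv, hUinv', Matrix.mul_one]
  have hRorth' : R * Rᵀ = 1 := mul_eq_one_comm.mp hRorth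
  have hRdet : R.det = 1 := by
    have hsq : R.det * R.det = 1 := by
      have := congrArg Matrix.det hRorth
      simpa [Matrix.det_mul, Matrix.det_transpose, mul_comm] using this
    have hRU : R.det * U.det = F.det := by rw [← Matrix.det_mul, hFRU]
    have hpos : 0 < R.det := by nlinarith
    rcases mul_self_eq_one_iff.mp hsq with h1 | h1
    · exact h1
    · linarith
  have cancel : ∀ X Y : Matrix (Fin 3) (Fin 3) ℝ,
      (R * X * Rᵀ) * (R * Y * Rᵀ) = R * (X * Y) * Rᵀ := by
    intro X Y
    calc (R * X * Rᵀ) * (R * Y * Rᵀ) = R * X * (Rᵀ * R) * (Y * Rᵀ) := by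
          simp [Matrix.mul_assoc]
      _ = R * (X * Y) * Rᵀ := by rw [hRorth]; simp [Matrix.mul_assoc]
  -- B = R C Rᵀ
  have hBconj : F * Fᵀ = R * (Fᵀ * F) * Rᵀ := by
    calc F * Fᵀ = (R * U) * (R * U)ᵀ := by rw [hFRU]
      _ = R * (U * U) * Rᵀ := by
          rw [Matrix.transpose_mul, hUsymm]; simp [Matrix.mul_assoc]
      _ = R * (Fᵀ * F) * Rᵀ := by rw [hU2]
  -- sqrt of B is R U Rᵀ
  have hRURt_psd : (R * U * Rᵀ).PosSemidef := by
    have := hU.mul_mul_conjTranspose_same R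
    simpa using this
  have hsqrtB : R * U * Rᵀ = hB.posSemidef.sqrt := by
    apply hRURt_psd.eq_sqrt_of_sq_eq
    rw [pow_two, cancel, hU2, hBconj]
  -- isotropy with rotation Rᵀ
  have hisoR : h (R * (Fᵀ * F) * Rᵀ) = R * h (Fᵀ * F) * Rᵀ := by
    have := hiso (Fᵀ * F) hC Rᵀ (by simpa using hRorth') (by simp [hRdet])
    simpa using this
  set G := h (Fᵀ * F) with hG
  rw [← hsqrtB, hBconj, hisoR, cancel, cancel, ← hFRU, Matrix.transpose_mul, hUsymm]
  simp [Matrix.mul_assoc]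
end

section
/- Let F be an invertible 3×3 real matrix with det F > 0, set C = Fᵀ F and B = F Fᵀ, and let h be an isotropic map from 3×3 real symmetric positive-definite matrices to 3×3 real symmetric matrices. Then F * h(C) * Fᵀ = h(B) * B; i.e. the Cauchy stress tensor divided by the density is given by σ/ρ = h(B) B. -/
open Matrix

private lemma conj_mul_conj {Q A B : Matrix (Fin 3) (Fin 3) ℝ} (hQ : Qᵀ * Q = 1) :
    (Q * A * Qᵀ) * (Q * B * Qᵀ) = Q * (A * B) * Qᵀ := by
  simp only [Matrix.mul_assoc]
  rw [← Matrix.mul_assoc Qᵀ Q, hQ, Matrix.one_mul]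

/-- For an invertible `F` with positive determinant and an isotropic map `h`, with
`C = Fᵀ F` and `B = F Fᵀ`, the Cauchy stress divided by the density satisfies
`F h(C) Fᵀ = h(B) B`. -/
theorem cauchy_stress_eq_h_mul_B
    (F : Matrix (Fin 3) (Fin 3) ℝ) (hFdet : 0 < F.det)
    (h : Matrix (Fin 3) (Fin 3) ℝ → Matrix (Fin 3) (Fin 3) ℝ)
    (hsym : ∀ M : Matrix (Fin 3) (Fin 3) ℝ, M.PosDef → (h M)ᵀ = h M)
    (hiso : ∀ M : Matrix (Fin 3) (Fin 3) ℝ, M.PosDef →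
      ∀ R : Matrix (Fin 3) (Fin 3) ℝ, Rᵀ * R = 1 → R.det = 1 →
        h (Rᵀ * M * R) = Rᵀ * h M * R) :
    F * h (Fᵀ * F) * Fᵀ = h (F * Fᵀ) * (F * Fᵀ) := by
  classical
  have hdetne : F.det ≠ 0 := ne_of_gt hFdet
  have hFu : IsUnit F.det := hdetne.isUnit
  have hFtu : IsUnit Fᵀ.det := by rwa [det_transpose]
  -- B = F Fᵀ is positive definite
  have hBpd : (F * Fᵀ).PosDef := by
    refine Matrix.PosDef.of_dotProduct_mulVec_pos ?_ fun x hx => ?_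
    · rw [← conjTranspose_eq_transpose_of_trivial]
      exact isHermitian_mul_conjTranspose_self F
    · have hx' : Fᵀ *ᵥ x ≠ 0 := by
        intro hc
        apply hx
        have hinj : Function.Injective (Fᵀ.mulVec) :=
          mulVec_injective_iff_isUnit.2 ((isUnit_iff_isUnit_det _).2 hFtu)
        exact hinj (by simpa using hc)
      have hrw : star x ⬝ᵥ (F * Fᵀ) *ᵥ x = star (Fᵀ *ᵥ x) ⬝ᵥ (Fᵀ *ᵥ x) := by
        rw [← mulVec_mulVec, dotProduct_mulVec]
        congr 1
        simp [vecMul_transpose, mulVec_transpose]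
      rw [hrw]
      exact dotProduct_star_self_pos_iff.2 hx'
  set B : Matrix (Fin 3) (Fin 3) ℝ := F * Fᵀ with hBdef
  have hB : B.IsHermitian := hBpd.1
  set Q : Matrix (Fin 3) (Fin 3) ℝ := (hB.eigenvectorUnitary : Matrix (Fin 3) (Fin 3) ℝ) with hQdef
  set lam : Fin 3 → ℝ := hB.eigenvalues with hlamdef
  have hQ1 : Qᵀ * Q = 1 := by
    have h2 := hB.eigenvectorUnitary.2
    rw [mem_unitaryGroup_iff'] at h2
    simpa only [Matrix.star_eq_conjTranspose, conjTranspose_eq_transpose_of_trivial] using h2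
  have hQ2 : Q * Qᵀ = 1 := mul_eq_one_comm.mp hQ1
  have hspec : B = Q * diagonal lam * Qᵀ := by
    have := hB.spectral_theorem
    simpa only [Unitary.conjStarAlgAut_apply, Matrix.star_eq_conjTranspose, conjTranspose_eq_transpose_of_trivial,
      RCLike.ofReal_real_eq_id, Function.comp_id, Function.id_comp] using this
  have hlampos : ∀ i, 0 < lam i := hBpd.eigenvalues_pos
  -- the matrix of h B in the eigenbasis
  set M : Matrix (Fin 3) (Fin 3) ℝ := Qᵀ * h B * Q with hMdef
  have hBQM : h B = Q * M * Qᵀ := by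
    rw [hMdef]
    simp only [Matrix.mul_assoc]
    rw [hQ2, Matrix.mul_one, ← Matrix.mul_assoc, hQ2, Matrix.one_mul]
  -- off-diagonal entries of M vanish, by isotropy applied to sign-flip rotations
  have hMoff : ∀ i j, i ≠ j → M i j = 0 := by
    intro i j hij
    have hs2 : ∀ k : Fin 3, (if k = j then (1:ℝ) else -1) * (if k = j then (1:ℝ) else -1) = 1 := by
      intro k; by_cases hk : k = j <;> simp [hk]
    set s : Fin 3 → ℝ := fun k => if k = j then 1 else -1 with hsdef
    set S : Matrix (Fin 3) (Fin 3) ℝ := diagonal s with hSdef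
    have hSsym : Sᵀ = S := by rw [hSdef, diagonal_transpose]
    have hSo : Sᵀ * S = 1 := by
      rw [hSsym, hSdef, diagonal_mul_diagonal]
      have he : (fun k => s k * s k) = fun _ => (1:ℝ) := funext fun k => hs2 k
      rw [he, diagonal_one]
    have hSdet : S.det = 1 := by
      rw [hSdef, det_diagonal, hsdef]
      fin_cases j <;> simp [Fin.prod_univ_three]
    set R : Matrix (Fin 3) (Fin 3) ℝ := Q * S * Qᵀ with hRdef
    have hRT : Rᵀ = R := by
      rw [hRdef]
      simp only [transpose_mul, transpose_transpose, hSsym, Matrix.mul_assoc]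
    have hRo : Rᵀ * R = 1 := by
      rw [hRT, hRdef, conj_mul_conj hQ1]
      have hSS : S * S = 1 := by rw [← hSo, hSsym]
      rw [hSS, Matrix.mul_one, hQ2]
    have hRdet : R.det = 1 := by
      have hQdet : Q.det * Q.det = 1 := by
        have := congrArg Matrix.det hQ1
        simpa [det_transpose] using this
      rw [hRdef, det_mul, det_mul, det_transpose, hSdet, mul_one, hQdet]
    have hRBR : Rᵀ * B * R = B := by
      rw [hRT]
      conv_lhs => rw [hRdef, hspec]
      rw [conj_mul_conj hQ1, conj_mul_conj hQ1, hSdef, diagonal_mul_diagonal,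
        diagonal_mul_diagonal]
      have he : (fun k => s k * lam k * s k) = lam := by
        funext k
        by_cases hk : k = j <;> simp [hsdef, hk]
      rw [he, hspec]
    have hiso' := hiso B hBpd R hRo hRdet
    rw [hRBR] at hiso'
    -- hiso' : h B = Rᵀ * h B * R
    have hMS : M = S * M * S := by
      rw [hMdef]
      conv_lhs => rw [hiso', hRT, hRdef, hBQM]
      simp only [Matrix.mul_assoc]
      simp only [← Matrix.mul_assoc Qᵀ Q, hQ1, Matrix.one_mul, Matrix.mul_one]
      rw [hMdef]
      simp only [Matrix.mul_assoc]
    have hentry := congrFun (congrFun hMS i) j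
    rw [hSdef] at hentry
    rw [show (diagonal s * M * diagonal s) i j = s i * M i j * s j by
      rw [Matrix.mul_diagonal, Matrix.diagonal_mul]] at hentry
    rw [hsdef] at hentry
    simp only [if_neg hij, if_pos, mul_one, neg_mul, one_mul, neg_neg] at hentry
    linarith
  have hMdiag : M = diagonal (fun i => M i i) := by
    ext i j
    by_cases hij : i = j
    · subst hij; simp
    · rw [diagonal_apply_ne _ hij]
      exact hMoff i j hij
  -- square root of B
  set g : Fin 3 → ℝ := fun i => Real.sqrt (lam i) with hgdef
  have hgpos : ∀ i, 0 < g i := fun i => Real.sqrt_pos.2 (hlampos i)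
  have hgg : ∀ i, g i * g i = lam i := fun i => Real.mul_self_sqrt (hlampos i).le
  set G : Matrix (Fin 3) (Fin 3) ℝ := Q * diagonal g * Qᵀ with hGdef
  set g' : Fin 3 → ℝ := fun i => (g i)⁻¹ with hg'def
  set G' : Matrix (Fin 3) (Fin 3) ℝ := Q * diagonal g' * Qᵀ with hG'def
  have hGsym : Gᵀ = G := by
    rw [hGdef]; simp only [transpose_mul, transpose_transpose, diagonal_transpose, Matrix.mul_assoc]
  have hG'sym : G'ᵀ = G' := by
    rw [hG'def]; simp only [transpose_mul, transpose_transpose, diagonal_transpose, Matrix.mul_assoc]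
  have hGG : G * G = B := by
    rw [hGdef, conj_mul_conj hQ1, diagonal_mul_diagonal]
    have he : (fun i => g i * g i) = lam := funext fun i => hgg i
    rw [he, hspec]
  have hGG' : G * G' = 1 := by
    rw [hGdef, hG'def, conj_mul_conj hQ1, diagonal_mul_diagonal]
    have : (fun i => g i * g' i) = fun _ => (1:ℝ) := by
      funext i; rw [hg'def]; exact mul_inv_cancel₀ (hgpos i).ne'
    rw [this, diagonal_one, Matrix.mul_one, hQ2]
  have hG'G : G' * G = 1 := mul_eq_one_comm.mp hGG'
  have hBinv : B⁻¹ = G' * G' := by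
    apply inv_eq_right_inv
    rw [hG'def, conj_mul_conj hQ1, hspec, conj_mul_conj hQ1, diagonal_mul_diagonal,
      diagonal_mul_diagonal]
    have he : (fun i => lam i * (g' i * g' i)) = fun _ => (1:ℝ) := by
      funext i
      rw [hg'def, ← hgg i]
      field_simp
      exact div_self (hgpos i).ne'
    rw [he, diagonal_one, Matrix.mul_one, hQ2]
  set R : Matrix (Fin 3) (Fin 3) ℝ := G' * F with hRdef
  have hRo : Rᵀ * R = 1 := by
    rw [hRdef, transpose_mul, hG'sym, Matrix.mul_assoc, ← Matrix.mul_assoc G' G' F, ← hBinv,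
      hBdef, Matrix.mul_inv_rev, Matrix.mul_assoc, Matrix.nonsing_inv_mul F hFu,
      Matrix.mul_one, Matrix.mul_nonsing_inv Fᵀ hFtu]
  have hRRt : R * Rᵀ = 1 := mul_eq_one_comm.mp hRo
  have hG'detpos : 0 < G'.det := by
    have hQdet : Q.det * Q.det = 1 := by
      have := congrArg Matrix.det hQ1
      simpa [det_transpose] using this
    have hd : (diagonal g').det = ∏ i, g' i := det_diagonal
    have hdpos : 0 < ∏ i : Fin 3, g' i :=
      Finset.prod_pos fun i _ => inv_pos.2 (hgpos i)
    calc 0 < Q.det * Q.det * ∏ i, g' i := by rw [hQdet]; simpa using hdpos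
      _ = G'.det := by rw [hG'def, det_mul, det_mul, det_transpose, hd]; ring
  have hRdet : R.det = 1 := by
    have hsq : R.det * R.det = 1 := by
      have := congrArg Matrix.det hRo
      simpa [det_transpose] using this
    have hpos : 0 < R.det := by
      rw [hRdef, det_mul]
      exact mul_pos hG'detpos hFdet
    nlinarith
  have hFGR : F = G * R := by
    rw [hRdef, ← Matrix.mul_assoc, hGG', Matrix.one_mul]
  have hC : Fᵀ * F = Rᵀ * B * R := by
    rw [hRdef, transpose_mul, hG'sym, ← hGG]
    simp only [Matrix.mul_assoc]
    rw [← Matrix.mul_assoc G' G, hG'G, Matrix.one_mul, ← Matrix.mul_assoc G G', hGG',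
      Matrix.one_mul]
  have hiso' := hiso B hBpd R hRo hRdet
  rw [hC, hiso']
  conv_lhs => rw [hFGR]
  rw [transpose_mul G R, hGsym]
  have hmid : G * R * (Rᵀ * h B * R) * (Rᵀ * G) = G * h B * G := by
    simp only [Matrix.mul_assoc]
    rw [← Matrix.mul_assoc R Rᵀ, hRRt, Matrix.one_mul, ← Matrix.mul_assoc R Rᵀ, hRRt,
      Matrix.one_mul]
  rw [hmid]
  -- final: G * h B * G = h B * B
  rw [hBQM, hMdiag, hGdef, hspec]
  rw [conj_mul_conj hQ1, conj_mul_conj hQ1, conj_mul_conj hQ1]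
  congr 2
  rw [diagonal_mul_diagonal, diagonal_mul_diagonal, diagonal_mul_diagonal]
  exact congrArg diagonal (funext fun i => by rw [← hgg i]; ring)
end

section
/- The matrix exponential exp : Matrix (Fin n) (Fin n) ℝ → Matrix (Fin n) (Fin n) ℝ is Fréchet differentiable at every point A, and its derivative in the direction δA is given by D(exp)(A)(δA) = exp(A) * ∫_{s=0}^{1} exp(-s•A) * δA * exp(s•A) ds. Formally: for every A, the map exp has at A the Fréchet derivative given by the continuous linear map H ↦ exp(A) * ∫ s in (0:ℝ)..1, exp(-s • A) * H * exp(s • A). -/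
open Matrix NormedSpace

attribute [local instance] Matrix.linftyOpNormedAddCommGroup Matrix.linftyOpNormedRing
  Matrix.linftyOpNormedSpace Matrix.linftyOpNormedAlgebra

section Aux

variable {n : ℕ}

local notation "Mn" => Matrix (Fin n) (Fin n) ℝ

lemma matrix_exp_cont : Continuous (exp : Mn → Mn) := exp_continuous

/-- Duhamel's formula. -/
lemma matrix_exp_duhamel (X P : Mn) :
    exp (X + P) - exp X
      = ∫ s in (0:ℝ)..1, exp ((1 - s) • X) * P * exp (s • (X + P)) := by
  have key : ∀ s : ℝ, HasDerivAt (fun s : ℝ => exp ((1 - s) • X) * exp (s • (X + P)))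
      (exp ((1 - s) • X) * P * exp (s • (X + P))) s := by
    intro s
    have hinner : HasDerivAt (fun s : ℝ => (1 : ℝ) - s) (-1) s := by
      simpa using (hasDerivAt_id s).const_sub (1:ℝ)
    have h1 : HasDerivAt (fun s : ℝ => exp ((1 - s) • X))
        (-(X * exp ((1 - s) • X))) s := by
      have := (hasDerivAt_exp_smul_const' (𝕂 := ℝ) X (1 - s)).scomp s hinner
      simp only [neg_one_smul] at this
      exact this
    have h2 : HasDerivAt (fun s : ℝ => exp (s • (X + P)))
        ((X + P) * exp (s • (X + P))) s := hasDerivAt_exp_smul_const' (𝕂 := ℝ) (X + P) s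
    have hmul := h1.mul h2
    have hcomm : X * exp ((1 - s) • X) = exp ((1 - s) • X) * X :=
      ((Commute.refl X).smul_right (1 - s)).exp_right
    refine hmul.congr_deriv ?_
    rw [hcomm]
    set a := exp ((1 - s) • X)
    set b := exp (s • (X + P))
    noncomm_ring
  have hcont : Continuous fun s : ℝ => exp ((1 - s) • X) * P * exp (s • (X + P)) := by
    apply Continuous.mul
    · exact (matrix_exp_cont.comp (by continuity)).mul continuous_const
    · exact matrix_exp_cont.comp (by continuity)
  have := intervalIntegral.integral_eq_sub_of_hasDerivAt (a := (0:ℝ)) (b := 1)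
      (fun s _ => key s) (hcont.intervalIntegrable 0 1)
  rw [this]
  simp [exp_zero]

end Aux

/-- The matrix exponential is Fréchet differentiable at every point `A`, with derivative
`H ↦ exp A * ∫ s in 0..1, exp (-s • A) * H * exp (s • A)`. -/
theorem matrix_exp_hasFDerivAt {n : ℕ} (A : Matrix (Fin n) (Fin n) ℝ) :
    DifferentiableAt ℝ (exp : Matrix (Fin n) (Fin n) ℝ → Matrix (Fin n) (Fin n) ℝ) A ∧
      ∀ H : Matrix (Fin n) (Fin n) ℝ,
        fderiv ℝ (exp : Matrix (Fin n) (Fin n) ℝ → Matrix (Fin n) (Fin n) ℝ) A H =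
          exp A * ∫ s in (0:ℝ)..1, exp (-s • A) * H * exp (s • A) := by
  have hdiff : DifferentiableAt ℝ (exp : Matrix (Fin n) (Fin n) ℝ → Matrix (Fin n) (Fin n) ℝ) A := by
    refine (analyticAt_exp_of_mem_ball A ?_).differentiableAt
    rw [expSeries_radius_eq_top]
    exact edist_lt_top _ _
  refine ⟨hdiff, fun H => ?_⟩
  -- the auxiliary parametric integral
  set F : ℝ → Matrix (Fin n) (Fin n) ℝ :=
    fun t => ∫ s in (0:ℝ)..1, exp ((1 - s) • A) * H * exp (s • (A + t • H)) with hF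
  have hFcont : Continuous F := by
    apply intervalIntegral.continuous_parametric_intervalIntegral_of_continuous'
    show Continuous fun p : ℝ × ℝ =>
      exp ((1 - p.2) • A) * H * exp (p.2 • (A + p.1 • H))
    apply Continuous.mul
    · exact (matrix_exp_cont.comp (by continuity)).mul continuous_const
    · exact matrix_exp_cont.comp (by continuity)
  have hslope : ∀ t : ℝ, exp (A + t • H) - exp A = t • F t := by
    intro t
    rw [matrix_exp_duhamel A (t • H), hF]
    rw [← intervalIntegral.integral_smul]
    congr 1
    funext s
    simp [mul_smul_comm, smul_mul_assoc]
  -- derivative of t ↦ exp (A + t • H) at 0 equals F 0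
  have hd : HasDerivAt (fun t : ℝ => exp (A + t • H)) (F 0) 0 := by
    refine hasDerivAt_iff_tendsto_slope.mpr ?_
    have heq : ∀ t ∈ ({(0:ℝ)}ᶜ : Set ℝ),
        slope (fun t : ℝ => exp (A + t • H)) 0 t = F t := by
      intro t ht
      have ht' : t ≠ 0 := ht
      rw [slope_def_module]
      simp only [zero_smul, add_zero, sub_zero]
      rw [hslope t, smul_smul, inv_mul_cancel₀ ht', one_smul]
    refine Filter.Tendsto.congr' ?_ ((hFcont.tendsto 0).mono_left nhdsWithin_le_nhds)
    filter_upwards [self_mem_nhdsWithin] with t ht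
    exact (heq t ht).symm
  -- derivative via the Fréchet derivative of exp
  have hline : HasDerivAt (fun t : ℝ => A + t • H) H 0 := by
    have := ((hasDerivAt_id' (0:ℝ)).smul_const H).const_add A
    simp only [one_smul] at this
    exact this
  have hd2 : HasDerivAt (fun t : ℝ => exp (A + t • H))
      (fderiv ℝ (exp : Matrix (Fin n) (Fin n) ℝ → Matrix (Fin n) (Fin n) ℝ) A H) 0 := by
    refine HasFDerivAt.comp_hasDerivAt 0 ?_ hline
    simp only [zero_smul, add_zero]
    exact hdiff.hasFDerivAt
  have hval : fderiv ℝ (exp : Matrix (Fin n) (Fin n) ℝ → Matrix (Fin n) (Fin n) ℝ) A H = F 0 :=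
    hd2.unique hd
  rw [hval]
  show (∫ s in (0:ℝ)..1, exp ((1 - s) • A) * H * exp (s • (A + (0:ℝ) • H))) = _
  simp only [zero_smul, add_zero]
  -- now pull `exp A` inside the integral
  have hint : @IntervalIntegrable (Matrix (Fin n) (Fin n) ℝ)
      PseudoMetricSpace.toUniformSpace.toTopologicalSpace _
      (fun s : ℝ => exp (-s • A) * H * exp (s • A)) MeasureTheory.volume 0 1 := by
    apply Continuous.intervalIntegrable
    apply Continuous.mul
    · exact (matrix_exp_cont.comp (continuous_id.neg.smul continuous_const)).mul continuous_const
    · exact matrix_exp_cont.comp (continuous_id.smul continuous_const)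
  have hpull := ContinuousLinearMap.intervalIntegral_comp_comm
    (ContinuousLinearMap.mul ℝ _ (exp A)) hint
  simp only [ContinuousLinearMap.mul_apply'] at hpull
  rw [← hpull]
  congr 1
  funext s
  have hcomm : Commute A ((-s) • A) := (Commute.refl A).smul_right (-s)
  have : exp A * exp (-s • A) = exp ((1 - s) • A) := by
    refine (exp_add_of_commute hcomm).symm.trans ?_
    congr 1
    module
  rw [← mul_assoc, ← mul_assoc, this]
end

section
/- Let A be an n×n real matrix, let B = exp(A), let M be an n×n real matrix commuting with A, and let α : Matrix (Fin n) (Fin n) ℝ → ℝ be Fréchet differentiable at B with derivative δC ↦ trace(M * δC). Then α ∘ exp is Fréchet differentiable at A with derivative δA ↦ trace( (M * B) * δA ). -/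
open Matrix NormedSpace

attribute [local instance] Matrix.linftyOpNormedAddCommGroup Matrix.linftyOpNormedRing
  Matrix.linftyOpNormedSpace Matrix.linftyOpNormedAlgebra

set_option maxHeartbeats 1000000
set_option synthInstance.maxHeartbeats 400000

namespace PotentialCompExpAux

open scoped Nat

variable {n : ℕ}

/-- The continuous linear map `X ↦ trace (M * X * P)`. -/
noncomputable def sandwichTrace (M P : Matrix (Fin n) (Fin n) ℝ) :
    Matrix (Fin n) (Fin n) ℝ →L[ℝ] ℝ :=
  LinearMap.toContinuousLinearMap
    { toFun := fun X => Matrix.trace (M * X * P)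
      map_add' := fun X Y => by simp [Matrix.mul_add, Matrix.add_mul]
      map_smul' := fun c X => by simp [Matrix.mul_smul, Matrix.smul_mul] }

@[simp] lemma sandwichTrace_apply (M P X : Matrix (Fin n) (Fin n) ℝ) :
    sandwichTrace M P X = Matrix.trace (M * X * P) := rfl

lemma norm_one_le : ‖(1 : Matrix (Fin n) (Fin n) ℝ)‖ ≤ 1 := by
  rw [← Matrix.diagonal_one, Matrix.linfty_opNorm_diagonal]
  refine (pi_norm_le_iff_of_nonneg one_pos.le).2 fun i => by simp

lemma norm_pow_le (X : Matrix (Fin n) (Fin n) ℝ) (k : ℕ) :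
    ‖X ^ k‖ ≤ (1 + ‖X‖) ^ k := by
  induction k with
  | zero => rw [pow_zero, pow_zero]; exact norm_one_le
  | succ k ih =>
    calc ‖X ^ (k + 1)‖ = ‖X ^ k * X‖ := by rw [pow_succ]
    _ ≤ ‖X ^ k‖ * ‖X‖ := Matrix.linfty_opNorm_mul _ _
    _ ≤ (1 + ‖X‖) ^ k * (1 + ‖X‖) := by
        have h0 : (0:ℝ) ≤ ‖X‖ := norm_nonneg _
        exact mul_le_mul ih (by linarith) h0 (by positivity)
    _ = (1 + ‖X‖) ^ (k + 1) := (pow_succ _ _).symm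

/-- The normed topology on matrices, used locally for the analytic part. -/
noncomputable abbrev matTop : TopologicalSpace (Matrix (Fin n) (Fin n) ℝ) :=
  PseudoMetricSpace.toUniformSpace.toTopologicalSpace

attribute [local instance] matTop

lemma hasDerivAt_line_pow (A H : Matrix (Fin n) (Fin n) ℝ) (k : ℕ) (t : ℝ) :
    HasDerivAt (fun s : ℝ => (A + s • H) ^ k)
      (∑ i ∈ Finset.range k, (A + t • H) ^ i * H * (A + t • H) ^ (k - 1 - i)) t := by
  induction k with
  | zero => simpa using hasDerivAt_const t (1 : Matrix (Fin n) (Fin n) ℝ)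
  | succ k ih =>
    have hf : HasDerivAt (fun s : ℝ => A + s • H) H t := by
      simpa using ((hasDerivAt_id t).smul_const H).const_add A
    have h2 : HasDerivAt (fun s : ℝ => (A + s • H) ^ (k + 1))
        ((∑ i ∈ Finset.range k, (A + t • H) ^ i * H * (A + t • H) ^ (k - 1 - i)) * (A + t • H)
          + (A + t • H) ^ k * H) t := by
      simp only [pow_succ]
      exact ih.mul hf
    convert h2 using 1
    rw [Finset.sum_range_succ, Finset.sum_mul]
    congr 1
    · refine Finset.sum_congr rfl fun i hi => ?_
      have hik : i < k := Finset.mem_range.1 hi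
      have hki : k + 1 - 1 - i = (k - 1 - i) + 1 := by omega
      rw [hki, pow_succ, ← mul_assoc]
    · simp

/-- Core computation: the derivative of `t ↦ trace (M * exp (A + t • H))` at `0`. -/
lemma key (A M H : Matrix (Fin n) (Fin n) ℝ) (hMA : M * A = A * M) :
    HasDerivAt (fun t : ℝ => Matrix.trace (M * exp (A + t • H)))
      (Matrix.trace (M * exp A * H)) 0 := by
  classical
  set trM : Matrix (Fin n) (Fin n) ℝ →L[ℝ] ℝ := sandwichTrace M 1 with htrM
  have htrM_apply : ∀ X, trM X = Matrix.trace (M * X) := fun X => by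
    simp [htrM]
    exact (sandwichTrace_apply M 1 X).trans (by simp)
  set trMH : Matrix (Fin n) (Fin n) ℝ →L[ℝ] ℝ := sandwichTrace M H with htrMH
  set x : ℝ := 1 + ‖A‖ + ‖H‖ with hx
  have hx1 : (1 : ℝ) ≤ x := by
    have := norm_nonneg A; have := norm_nonneg H; simp [hx]; linarith
  set g : ℕ → ℝ → ℝ := fun k t => trM ((k ! : ℝ)⁻¹ • (A + t • H) ^ k) with hg
  set S : ℕ → ℝ → Matrix (Fin n) (Fin n) ℝ := fun k t =>
    ∑ i ∈ Finset.range k, (A + t • H) ^ i * H * (A + t • H) ^ (k - 1 - i) with hS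
  set g' : ℕ → ℝ → ℝ := fun k t => trM ((k ! : ℝ)⁻¹ • S k t) with hg'
  set u : ℕ → ℝ := fun k => ‖trM‖ * ‖H‖ * ((2 * x) ^ k / (k ! : ℝ)) with hu
  have hu_sum : Summable u := by
    simpa [hu, mul_div_assoc] using (Real.summable_pow_div_factorial (2 * x)).mul_left (‖trM‖ * ‖H‖)
  have hderiv : ∀ k t, t ∈ Metric.ball (0 : ℝ) 1 → HasDerivAt (g k) (g' k t) t := by
    intro k t _
    have h1 : HasDerivAt (fun s : ℝ => (Nat.factorial k : ℝ)⁻¹ • (A + s • H) ^ k)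
        ((Nat.factorial k : ℝ)⁻¹ • S k t) t := (hasDerivAt_line_pow A H k t).fun_const_smul _
    simpa [hg, hg', Function.comp_def] using trM.hasFDerivAt.comp_hasDerivAt t h1
  have hbound : ∀ k t, t ∈ Metric.ball (0 : ℝ) 1 → ‖g' k t‖ ≤ u k := by
    intro k t ht
    have hf_norm : ‖A + t • H‖ ≤ ‖A‖ + ‖H‖ := by
      have h1 : ‖A + t • H‖ ≤ ‖A‖ + ‖t • H‖ := norm_add_le _ _
      have h2 : ‖t • H‖ = |t| * ‖H‖ := by rw [norm_smul, Real.norm_eq_abs]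
      have h3 : |t| ≤ 1 := by
        have := Metric.mem_ball.1 ht
        simp [Real.dist_eq] at this
        linarith [abs_nonneg t]
      nlinarith [norm_nonneg H, abs_nonneg t]
    have hxf : 1 + ‖A + t • H‖ ≤ x := by simp [hx]; linarith
    have hterm : ∀ i ∈ Finset.range k,
        ‖(A + t • H) ^ i * H * (A + t • H) ^ (k - 1 - i)‖ ≤ x ^ k * ‖H‖ := by
      intro i hi
      have hik : i < k := Finset.mem_range.1 hi
      have b1 : ‖(A + t • H) ^ i‖ ≤ x ^ i :=
        (norm_pow_le _ i).trans (pow_le_pow_left₀ (by positivity) hxf i)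
      have b2 : ‖(A + t • H) ^ (k - 1 - i)‖ ≤ x ^ (k - 1 - i) :=
        (norm_pow_le _ _).trans (pow_le_pow_left₀ (by positivity) hxf _)
      calc ‖(A + t • H) ^ i * H * (A + t • H) ^ (k - 1 - i)‖
          ≤ ‖(A + t • H) ^ i * H‖ * ‖(A + t • H) ^ (k - 1 - i)‖ :=
            Matrix.linfty_opNorm_mul _ _
        _ ≤ (‖(A + t • H) ^ i‖ * ‖H‖) * ‖(A + t • H) ^ (k - 1 - i)‖ := by
            have := Matrix.linfty_opNorm_mul ((A + t • H) ^ i) H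
            exact mul_le_mul_of_nonneg_right this (norm_nonneg _)
        _ ≤ (x ^ i * ‖H‖) * x ^ (k - 1 - i) := by
            have h0 : (0:ℝ) ≤ ‖H‖ := norm_nonneg _
            have hxi : (0:ℝ) ≤ x ^ i := by positivity
            exact mul_le_mul (mul_le_mul b1 le_rfl h0 (by positivity)) b2 (norm_nonneg _)
              (by positivity)
        _ = x ^ (i + (k - 1 - i)) * ‖H‖ := by rw [pow_add]; ring
        _ ≤ x ^ k * ‖H‖ := by
            have : i + (k - 1 - i) ≤ k := by omega
            exact mul_le_mul_of_nonneg_right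
              (pow_le_pow_right₀ (by linarith) this) (norm_nonneg _)
    have hSnorm : ‖S k t‖ ≤ (k : ℝ) * (x ^ k * ‖H‖) := by
      calc ‖S k t‖ ≤ ∑ i ∈ Finset.range k, ‖(A + t • H) ^ i * H * (A + t • H) ^ (k - 1 - i)‖ :=
            norm_sum_le _ _
        _ ≤ ∑ _i ∈ Finset.range k, x ^ k * ‖H‖ := Finset.sum_le_sum hterm
        _ = (k : ℝ) * (x ^ k * ‖H‖) := by simp [mul_comm]
    have hk2 : (k : ℝ) ≤ 2 ^ k := by
      exact_mod_cast (Nat.lt_two_pow_self (n := k)).le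
    calc ‖g' k t‖ ≤ ‖trM‖ * ‖(k ! : ℝ)⁻¹ • S k t‖ := trM.le_opNorm _
      _ = ‖trM‖ * ((k ! : ℝ)⁻¹ * ‖S k t‖) := by
          rw [norm_smul, Real.norm_eq_abs, abs_of_nonneg (by positivity)]
      _ ≤ ‖trM‖ * ((k ! : ℝ)⁻¹ * ((k : ℝ) * (x ^ k * ‖H‖))) := by
          have : (0:ℝ) ≤ (k ! : ℝ)⁻¹ := by positivity
          exact mul_le_mul_of_nonneg_left (mul_le_mul_of_nonneg_left hSnorm this)
            (norm_nonneg _)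
      _ ≤ ‖trM‖ * ((k ! : ℝ)⁻¹ * ((2:ℝ) ^ k * (x ^ k * ‖H‖))) := by
          have h1 : (0:ℝ) ≤ x ^ k * ‖H‖ := by positivity
          have h2 : (0:ℝ) ≤ (k ! : ℝ)⁻¹ := by positivity
          exact mul_le_mul_of_nonneg_left (mul_le_mul_of_nonneg_left
            (mul_le_mul_of_nonneg_right hk2 h1) h2) (norm_nonneg _)
      _ = u k := by
          simp only [hu, mul_pow]
          field_simp
  have hsum0 : Summable fun k => g k 0 := by
    have hs : Summable fun k => ((k ! : ℝ)⁻¹ • (A + (0:ℝ) • H) ^ k) :=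
      NormedSpace.expSeries_summable' (A + (0:ℝ) • H)
    exact hs.map (trM : Matrix (Fin n) (Fin n) ℝ →L[ℝ] ℝ) trM.continuous
  have hmain : HasDerivAt (fun t => ∑' k, g k t) (∑' k, g' k 0) 0 :=
    hasDerivAt_tsum_of_isPreconnected hu_sum Metric.isOpen_ball
      (convex_ball (0:ℝ) 1).isPreconnected hderiv hbound
      (Metric.mem_ball_self one_pos) hsum0 (Metric.mem_ball_self one_pos)
  -- identify the function
  have hfun : ∀ t : ℝ, Matrix.trace (M * exp (A + t • H)) = ∑' k, g k t := by
    intro t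
    have hs : Summable fun k => ((k ! : ℝ)⁻¹ • (A + t • H) ^ k) :=
      NormedSpace.expSeries_summable' (A + t • H)
    rw [← htrM_apply, NormedSpace.exp_eq_tsum (𝕂 := ℝ), trM.map_tsum hs]
  -- identify the derivative value
  have hg'_sum : Summable fun k => g' k 0 :=
    Summable.of_norm_bounded hu_sum fun k => hbound k 0 (Metric.mem_ball_self one_pos)
  have hg'0 : ∀ k, g' k 0 = (k : ℝ) * (k ! : ℝ)⁻¹ * trMH (A ^ (k - 1)) := by
    intro k
    have hS0 : ∀ i ∈ Finset.range k,
        Matrix.trace (M * (A ^ i * H * A ^ (k - 1 - i))) = trMH (A ^ (k - 1)) := by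
      intro i hi
      have hik : i < k := Finset.mem_range.1 hi
      have hcomm : M * A ^ (k - 1 - i) = A ^ (k - 1 - i) * M :=
        ((Commute.pow_right (hMA : Commute M A) (k - 1 - i))).eq
      calc Matrix.trace (M * (A ^ i * H * A ^ (k - 1 - i)))
          = Matrix.trace ((M * A ^ i * H) * A ^ (k - 1 - i)) := by
            simp only [mul_assoc]
        _ = Matrix.trace (A ^ (k - 1 - i) * (M * A ^ i * H)) := (Matrix.trace_mul_comm _ _)
        _ = Matrix.trace (M * (A ^ (k - 1 - i) * A ^ i) * H) := by
            simp only [← mul_assoc]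
            rw [hcomm]
        _ = trMH (A ^ (k - 1)) := by
            rw [← pow_add]
            have : k - 1 - i + i = k - 1 := by omega
            rw [this]
            simp [htrMH]
            exact (sandwichTrace_apply M H _).symm
    have : trM (S k 0) = (k : ℝ) * trMH (A ^ (k - 1)) := by
      rw [htrM_apply]
      simp only [hS]
      rw [Matrix.mul_sum, Matrix.trace_sum]
      have : ∀ i ∈ Finset.range k,
          Matrix.trace (M * ((A + (0:ℝ) • H) ^ i * H * (A + (0:ℝ) • H) ^ (k - 1 - i)))
            = trMH (A ^ (k - 1)) := by
        intro i hi
        simpa using hS0 i hi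
      rw [Finset.sum_congr rfl this]
      simp [mul_comm]
    simp only [hg', _root_.map_smul, smul_eq_mul, this]
    ring
  have hval : (∑' k, g' k 0) = Matrix.trace (M * exp A * H) := by
    rw [Summable.tsum_eq_zero_add hg'_sum]
    have h0 : g' 0 0 = 0 := by simp [hg', hS]
    have hsucc : ∀ k : ℕ, g' (k + 1) 0 = trMH ((k ! : ℝ)⁻¹ • A ^ k) := by
      intro k
      rw [hg'0]
      have hfact : ((k + 1)! : ℝ) = ((k:ℝ) + 1) * (k ! : ℝ) := by
        rw [Nat.factorial_succ]; push_cast; ring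
      have hk : (k ! : ℝ) ≠ 0 := by positivity
      simp only [Nat.add_sub_cancel, _root_.map_smul, smul_eq_mul, hfact, Nat.cast_add, Nat.cast_one,
        mul_inv]
      field_simp
    rw [h0, zero_add]
    have hs : Summable fun k => ((k ! : ℝ)⁻¹ • A ^ k) :=
      NormedSpace.expSeries_summable' A
    calc (∑' k, g' (k + 1) 0) = ∑' k, trMH ((k ! : ℝ)⁻¹ • A ^ k) := by
          exact tsum_congr hsucc
      _ = trMH (exp A) := by rw [NormedSpace.exp_eq_tsum (𝕂 := ℝ), trMH.map_tsum hs]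
      _ = Matrix.trace (M * exp A * H) := by
          simp [htrMH]
          exact sandwichTrace_apply M H _
    -- done
  have := hmain
  rw [← hval]
  have hfun' : (fun t : ℝ => Matrix.trace (M * exp (A + t • H))) = fun t => ∑' k, g k t :=
    funext hfun
  rw [hfun']
  exact hmain

end PotentialCompExpAux

open PotentialCompExpAux in
/-- Chain rule for composing a potential with the matrix exponential: if `M` commutes with
`A` and `α` has at `B = exp A` the Fréchet derivative `δC ↦ trace (M * δC)`, then `α ∘ exp`
is Fréchet differentiable at `A` with derivative `δA ↦ trace ((M * B) * δA)`. -/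
theorem potential_comp_exp_fderiv {n : ℕ}
    (A M : Matrix (Fin n) (Fin n) ℝ) (hMA : M * A = A * M)
    (α : Matrix (Fin n) (Fin n) ℝ → ℝ)
    (L : Matrix (Fin n) (Fin n) ℝ →L[ℝ] ℝ)
    (hL : ∀ δC : Matrix (Fin n) (Fin n) ℝ, L δC = Matrix.trace (M * δC))
    (hα : HasFDerivAt α L (exp A)) :
    DifferentiableAt ℝ (α ∘ exp) A ∧
      ∀ δA : Matrix (Fin n) (Fin n) ℝ,
        fderiv ℝ (α ∘ exp) A δA = Matrix.trace (M * exp A * δA) := by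
  have hexp : DifferentiableAt ℝ (exp) A :=
    (NormedSpace.exp_analytic A).differentiableAt
  set D := fderiv ℝ (exp) A with hD
  have hDexp : HasFDerivAt (exp) D A := hexp.hasFDerivAt
  have hcomp : HasFDerivAt (α ∘ exp) (L.comp D) A := hα.comp A hDexp
  refine ⟨hcomp.differentiableAt, fun δA => ?_⟩
  rw [hcomp.fderiv]
  have hline : HasDerivAt (fun t : ℝ => A + t • δA) δA 0 := by
    have := ((hasDerivAt_id (0:ℝ)).smul_const δA).const_add A
    simp only [id_eq, one_smul] at this
    exact this
  have h1 : HasDerivAt (fun t : ℝ => exp (A + t • δA)) (D δA) 0 := by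
    have h0 : HasFDerivAt (exp) D (A + (0:ℝ) • δA) := by simpa using hDexp
    have := h0.comp_hasDerivAt 0 hline
    simp only [Function.comp_def] at this
    exact this
  have trM : Matrix (Fin n) (Fin n) ℝ →L[ℝ] ℝ := sandwichTrace M 1
  have h2 : HasDerivAt (fun t : ℝ => Matrix.trace (M * exp (A + t • δA)))
      (Matrix.trace (M * D δA)) 0 := by
    have := (sandwichTrace M 1).hasFDerivAt.comp_hasDerivAt 0 h1
    have e : (sandwichTrace M 1) (D δA) = Matrix.trace (M * D δA) := by
      show Matrix.trace (M * D δA * 1) = _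
      rw [mul_one]
    simp only [Function.comp_def, sandwichTrace_apply, mul_one] at this
    exact e ▸ this
  have h3 := PotentialCompExpAux.key A M δA hMA
  have huniq : Matrix.trace (M * D δA) = Matrix.trace (M * exp A * δA) :=
    h2.unique h3
  have hc : (L.comp D) δA = L (D δA) := rfl
  rw [hc, hL, huniq]
end

section
/- Let B be a 3×3 real symmetric positive-definite matrix and let h be an isotropic map from 3×3 real symmetric positive-definite matrices to 3×3 real symmetric matrices. Then the product h(B) * B is a symmetric matrix: (h(B) * B)ᵀ = h(B) * B. (Hence the Cauchy stress tensor σ/ρ = h(B) B is symmetric.) -/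
open Matrix

private lemma sign_conj_entry (e : Fin 3 → ℝ) (X : Matrix (Fin 3) (Fin 3) ℝ) (i j : Fin 3) :
    (Matrix.diagonal e * X * Matrix.diagonal e) i j = e i * X i j * e j := by
  rw [Matrix.mul_diagonal, Matrix.diagonal_mul]

private lemma sign_diag_orth (e : Fin 3 → ℝ) (he : ∀ i, e i * e i = 1) :
    (Matrix.diagonal e)ᵀ * Matrix.diagonal e = 1 := by
  rw [Matrix.diagonal_transpose, Matrix.diagonal_mul_diagonal, ← Matrix.diagonal_one]
  exact congrArg Matrix.diagonal (funext he)

private lemma sign_conj_diag_eq (e dv : Fin 3 → ℝ) (he : ∀ i, e i * e i = 1) :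
    (Matrix.diagonal e)ᵀ * Matrix.diagonal dv * Matrix.diagonal e = Matrix.diagonal dv := by
  rw [Matrix.diagonal_transpose, Matrix.diagonal_mul_diagonal, Matrix.diagonal_mul_diagonal]
  refine congrArg Matrix.diagonal (funext fun i => ?_)
  calc e i * dv i * e i = dv i * (e i * e i) := by ring
    _ = dv i := by rw [he i, mul_one]

private lemma sign_pair (i j : Fin 3) (hij : i ≠ j) :
    ![(1:ℝ), -1, -1] i * ![(1:ℝ), -1, -1] j = -1 ∨
    ![(-1:ℝ), 1, -1] i * ![(-1:ℝ), 1, -1] j = -1 := by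
  fin_cases i <;> fin_cases j <;> simp_all

/-- If `h` is an isotropic map from symmetric positive-definite `3×3` real matrices to
symmetric matrices, then `h(B) * B` is symmetric (hence the Cauchy stress `σ/ρ = h(B) B`
is symmetric). -/
theorem h_mul_B_symmetric
    (B : Matrix (Fin 3) (Fin 3) ℝ) (hB : B.PosDef)
    (h : Matrix (Fin 3) (Fin 3) ℝ → Matrix (Fin 3) (Fin 3) ℝ)
    (hsym : ∀ M : Matrix (Fin 3) (Fin 3) ℝ, M.PosDef → (h M)ᵀ = h M)
    (hiso : ∀ M : Matrix (Fin 3) (Fin 3) ℝ, M.PosDef →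
      ∀ R : Matrix (Fin 3) (Fin 3) ℝ, Rᵀ * R = 1 → R.det = 1 →
        h (Rᵀ * M * R) = Rᵀ * h M * R) :
    (h B * B)ᵀ = h B * B := by
  have hH : B.IsHermitian := hB.isHermitian
  set d : Fin 3 → ℝ := hH.eigenvalues with hd
  set D : Matrix (Fin 3) (Fin 3) ℝ := Matrix.diagonal d with hDdef
  have hDpos : D.PosDef := Matrix.posDef_diagonal_iff.mpr fun i => hB.eigenvalues_pos i
  set U : Matrix (Fin 3) (Fin 3) ℝ := (hH.eigenvectorUnitary : Matrix (Fin 3) (Fin 3) ℝ) with hU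
  have hUst : star U * U = 1 := Matrix.mem_unitaryGroup_iff'.mp hH.eigenvectorUnitary.2
  have hUst' : U * star U = 1 := mul_eq_one_comm.mp hUst
  have hstar : ∀ M : Matrix (Fin 3) (Fin 3) ℝ, star M = Mᵀ := by
    intro M
    rw [Matrix.star_eq_conjTranspose, Matrix.conjTranspose_eq_transpose_of_trivial]
  have hspec : B = U * D * Uᵀ := by
    have h0 := hH.spectral_theorem
    simp only [Unitary.conjStarAlgAut_apply, Unitary.coe_star] at h0
    rw [hstar] at h0
    have hco : (RCLike.ofReal ∘ hH.eigenvalues : Fin 3 → ℝ) = d := by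
      funext i; simp [hd]
    rw [hco] at h0
    exact h0
  have hdetU : U.det = 1 ∨ U.det = -1 := by
    have h1 : U.det * U.det = 1 := by
      have := congrArg Matrix.det hUst
      rwa [Matrix.det_mul, hstar, Matrix.det_transpose, Matrix.det_one] at this
    exact mul_self_eq_one_iff.mp h1
  set E : Matrix (Fin 3) (Fin 3) ℝ := Matrix.diagonal ![-1, 1, 1] with hE
  have heE : ∀ i, (![(-1:ℝ), 1, 1]) i * (![(-1:ℝ), 1, 1]) i = 1 := by
    intro i; fin_cases i <;> norm_num
  obtain ⟨Q, hQorth, hQdet, hQB⟩ :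
      ∃ Q : Matrix (Fin 3) (Fin 3) ℝ, Qᵀ * Q = 1 ∧ Q.det = 1 ∧ B = Qᵀ * D * Q := by
    rcases hdetU with h1 | h1
    · refine ⟨Uᵀ, ?_, ?_, ?_⟩
      · rw [Matrix.transpose_transpose, ← hstar, hUst']
      · rw [Matrix.det_transpose, h1]
      · rw [Matrix.transpose_transpose]; exact hspec
    · refine ⟨E * Uᵀ, ?_, ?_, ?_⟩
      · have hEE : Eᵀ * E = 1 := sign_diag_orth _ heE
        rw [Matrix.transpose_mul, Matrix.transpose_transpose]
        calc U * Eᵀ * (E * Uᵀ) = U * (Eᵀ * E) * Uᵀ := by noncomm_ring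
          _ = U * Uᵀ := by rw [hEE, mul_one]
          _ = 1 := by rw [← hstar, hUst']
      · rw [Matrix.det_mul, Matrix.det_transpose, h1, hE, Matrix.det_diagonal,
          Fin.prod_univ_three]
        norm_num; simp
      · have hEDE : Eᵀ * D * E = D := by rw [hE, hDdef]; exact sign_conj_diag_eq _ _ heE
        rw [Matrix.transpose_mul, Matrix.transpose_transpose]
        calc B = U * D * Uᵀ := hspec
          _ = U * (Eᵀ * D * E) * Uᵀ := by rw [hEDE]
          _ = U * Eᵀ * D * (E * Uᵀ) := by noncomm_ring
  have hhB : h B = Qᵀ * h D * Q := by rw [hQB]; exact hiso D hDpos Q hQorth hQdet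
  set X : Matrix (Fin 3) (Fin 3) ℝ := h D with hX
  have key : ∀ e : Fin 3 → ℝ, (∀ i, e i * e i = 1) →
      (Matrix.diagonal e).det = 1 → X = Matrix.diagonal e * X * Matrix.diagonal e := by
    intro e he hdet
    have horth := sign_diag_orth e he
    have hfix : (Matrix.diagonal e)ᵀ * D * Matrix.diagonal e = D := by
      rw [hDdef]; exact sign_conj_diag_eq _ _ he
    have := hiso D hDpos (Matrix.diagonal e) horth hdet
    rw [hfix, Matrix.diagonal_transpose] at this
    exact this
  have k1 := key ![1, -1, -1] (by intro i; fin_cases i <;> norm_num)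
    (by rw [Matrix.det_diagonal, Fin.prod_univ_three]; norm_num; simp)
  have k2 := key ![-1, 1, -1] (by intro i; fin_cases i <;> norm_num)
    (by rw [Matrix.det_diagonal, Fin.prod_univ_three]; norm_num; simp)
  have hoff : ∀ i j : Fin 3, i ≠ j → X i j = 0 := by
    intro i j hij
    have e1 : X i j = ![(1:ℝ), -1, -1] i * X i j * ![(1:ℝ), -1, -1] j := by
      conv_lhs => rw [k1]
      rw [sign_conj_entry]
    have e2 : X i j = ![(-1:ℝ), 1, -1] i * X i j * ![(-1:ℝ), 1, -1] j := by
      conv_lhs => rw [k2]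
      rw [sign_conj_entry]
    rcases sign_pair i j hij with hp | hp
    · have h3 : X i j = - X i j := by
        calc X i j = ![(1:ℝ), -1, -1] i * X i j * ![(1:ℝ), -1, -1] j := e1
          _ = (![(1:ℝ), -1, -1] i * ![(1:ℝ), -1, -1] j) * X i j := by ring
          _ = -1 * X i j := by rw [hp]
          _ = - X i j := by ring
      linarith
    · have h3 : X i j = - X i j := by
        calc X i j = ![(-1:ℝ), 1, -1] i * X i j * ![(-1:ℝ), 1, -1] j := e2
          _ = (![(-1:ℝ), 1, -1] i * ![(-1:ℝ), 1, -1] j) * X i j := by ring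
          _ = -1 * X i j := by rw [hp]
          _ = - X i j := by ring
      linarith
  have hcomm : X * D = D * X := by
    ext i j
    rw [hDdef, Matrix.mul_diagonal, Matrix.diagonal_mul]
    rcases eq_or_ne i j with rfl | hij
    · ring
    · rw [hoff i j hij]; ring
  have hQQ : Q * Qᵀ = 1 := mul_eq_one_comm.mp hQorth
  have hmain : h B * B = B * h B := by
    rw [hhB, hQB]
    calc Qᵀ * X * Q * (Qᵀ * D * Q) = Qᵀ * X * (Q * Qᵀ) * D * Q := by noncomm_ring
      _ = Qᵀ * (X * D) * Q := by rw [hQQ]; noncomm_ring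
      _ = Qᵀ * (D * X) * Q := by rw [hcomm]
      _ = Qᵀ * D * (Q * Qᵀ) * X * Q := by rw [hQQ]; noncomm_ring
      _ = Qᵀ * D * Q * (Qᵀ * X * Q) := by noncomm_ring
  have hBt : Bᵀ = B := by
    have h4 := hH
    rwa [Matrix.IsHermitian, Matrix.conjTranspose_eq_transpose_of_trivial] at h4
  rw [Matrix.transpose_mul, hBt, hsym B hB, hmain]
end
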